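/- Let P be a Poisson n-Lie algebra over a field F, a ∈ P, and λ ∈ F. Then the generalized eigenspace P_{a,λ} = {x ∈ P : (P_a − λ·id)^k(x) = 0 for some k ∈ ℕ} is an ideal of P: it is closed under multiplication by elements of P and satisfies [P_{a,λ}, P, …, P] ⊆ P_{a,λ}. -/

import Mathlib

/-- In a Poisson `n`-Lie algebra, the generalized eigenspace
`P_{a,λ} = {x : (P_a − λ·id)^k x = 0 for some k}` of the multiplication
operator `P_a` is an ideal: it is a subspace closed under multiplication by
elements of `P` and under brackets with entries from `P`. -/
theorem generalized_eigenspace_is_ideal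
    (F P : Type*) [Field F] [CommRing P] [Algebra F P] (m : ℕ)
    (br : AlternatingMap F P P (Fin (m + 2)))
    (hFI : ∀ (x : Fin (m + 1) → P) (y : Fin (m + 2) → P),
      br (Fin.snoc x (br y)) =
        ∑ i, br (Function.update y i (br (Fin.snoc x (y i)))))
    (hLeib : ∀ (u v : P) (x : Fin (m + 1) → P),
      br (Fin.cons (u * v) x) = u * br (Fin.cons v x) + v * br (Fin.cons u x))
    (a : P) (lam : F) :
    ∃ S : Submodule F P,
      (∀ x : P, x ∈ S ↔ ∃ k : ℕ,
        (((LinearMap.mulLeft F a - lam • LinearMap.id : P →ₗ[F] P)) ^ k) x = 0) ∧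
      (∀ x ∈ S, ∀ p : P, p * x ∈ S) ∧
      (∀ x ∈ S, ∀ y : Fin (m + 1) → P, br (Fin.snoc y x) ∈ S) := by
  set T : P →ₗ[F] P := LinearMap.mulLeft F a - lam • LinearMap.id with hT
  -- T commutes with left multiplication
  have hTmul : ∀ (p x : P), T (p * x) = p * T x := by
    intro p x
    simp only [hT, LinearMap.sub_apply, LinearMap.smul_apply, LinearMap.mulLeft_apply,
      LinearMap.id_apply, mul_sub, mul_smul_comm]
    ring_nf
  have hTpowmul : ∀ (k : ℕ) (p x : P), (T ^ k) (p * x) = p * (T ^ k) x := by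
    intro k
    induction k with
    | zero => intro p x; simp
    | succ n ih =>
        intro p x
        rw [pow_succ', Module.End.mul_apply, Module.End.mul_apply, ih, hTmul]
  -- The generalized eigenspace
  refine ⟨{ carrier := {x | ∃ k : ℕ, (T ^ k) x = 0}
            add_mem' := ?_
            zero_mem' := ⟨0, by simp⟩
            smul_mem' := ?_ }, ?_, ?_, ?_⟩
  · rintro u v ⟨j, hj⟩ ⟨k, hk⟩
    refine ⟨j + k, ?_⟩
    rw [map_add]
    have h1 : (T ^ (j + k)) u = 0 := by
      rw [add_comm, pow_add, Module.End.mul_apply, hj, map_zero]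
    have h2 : (T ^ (j + k)) v = 0 := by
      rw [pow_add, Module.End.mul_apply, hk, map_zero]
    rw [h1, h2, add_zero]
  · rintro c x ⟨k, hk⟩
    exact ⟨k, by rw [map_smul, hk, smul_zero]⟩
  · intro x; exact Iff.rfl
  · rintro x ⟨k, hk⟩ p
    exact ⟨k, by rw [hTpowmul, hk, mul_zero]⟩
  · rintro x ⟨k, hk⟩ y
    -- the adjoint-type operator Q z = br (cons z y)
    let Q : P →ₗ[F] P :=
      { toFun := fun z => br (Fin.cons z y)
        map_add' := fun u v => by
          have := br.map_update_add (Fin.cons (0 : P) y) 0 u v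
          simpa only [Fin.update_cons_zero] using this
        map_smul' := fun c u => by
          have := br.map_update_smul (Fin.cons (0 : P) y) 0 c u
          simpa only [Fin.update_cons_zero, RingHom.id_apply] using this }
    -- commutation relation: T (Q z) = Q (T z) - (Q a) * z
    have hQ : ∀ z : P, Q z = br (Fin.cons z y) := fun _ => rfl
    have hTapp : ∀ z : P, T z = a * z - lam • z := fun z => rfl
    have happ : ∀ (j : ℕ) (w : P), (T ^ (j + 1)) w = T ((T ^ j) w) := fun j w => by
      rw [pow_succ', Module.End.mul_apply]
    have hcomm : ∀ z : P, T (Q z) = Q (T z) - Q a * z := by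
      intro z
      rw [hTapp (Q z), hTapp z, map_sub, map_smul, hQ, hQ, hQ, hLeib a z y]
      ring_nf
    -- key identity
    have hkey : ∀ (n : ℕ) (z : P),
        (T ^ (n + 1)) (Q z) = Q ((T ^ (n + 1)) z) - (n + 1) • (Q a * (T ^ n) z) := by
      intro n
      induction n with
      | zero =>
          intro z
          rw [zero_add, pow_one, pow_zero, Module.End.one_apply, one_smul]
          exact hcomm z
      | succ n ih =>
          intro z
          rw [happ (n + 1) (Q z), ih, map_sub, hcomm, map_nsmul, hTmul,
            ← happ (n + 1) z, ← happ n z, sub_sub]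
          congr 1
          conv_rhs => rw [succ_nsmul]
          exact add_comm _ _
    have hQx : (T ^ (k + 1)) (Q x) = 0 := by
      have hk1 : (T ^ (k + 1)) x = 0 := by
        rw [happ, hk, map_zero]
      rw [hkey k x, hk1, hk, mul_zero, smul_zero, map_zero, sub_zero]
    -- relate snoc to cons via the rotation permutation
    have hsnoc : (Fin.snoc y x : Fin (m + 2) → P) =
        (Fin.cons x y : Fin (m + 2) → P) ∘ (finRotate (m + 2)) := by
      rw [Fin.snoc_eq_cons_rotate]; rfl
    have hval : br (Fin.snoc y x) =
        (Equiv.Perm.sign (finRotate (m + 2)) : ℤˣ) • Q x := by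
      rw [hsnoc, br.map_perm, hQ]
    refine ⟨k + 1, ?_⟩
    rw [hval, Units.smul_def, map_zsmul, hQx, smul_zero]
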